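/- arXiv:2506.08539 — 4 statements merged into one kernel-verified Lean document; each statement's English description precedes it below -/
import Mathlib

section
/- Let $\mathcal{A} = \{H_1,\dots,H_m\}$ be a collection of linear hyperplanes in $\mathbb{R}^n$ with $H_i = \ker\langle\alpha_i,\cdot\rangle$ for nonzero $\alpha_i$, and let $T = \bigcap_{i=1}^m H_i$. Let $U$ be a $k$-dimensional subspace with $\dim(U\cap T) = l$, and let $\beta_i$ be the orthogonal projection of $\alpha_i$ onto $U$. Then $U \cap (U^\perp + T^\perp) = \mathrm{span}\{\beta_1,\dots,\beta_m\}$, and this space has dimension $k - l$. -/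
open RealInnerProductSpace

theorem stmt5 {n m k l : ℕ}
    (α : Fin m → EuclideanSpace ℝ (Fin n)) (hα : ∀ i, α i ≠ 0)
    (H : Fin m → Submodule ℝ (EuclideanSpace ℝ (Fin n)))
    (hH : ∀ i, H i = LinearMap.ker (innerSL ℝ (α i)).toLinearMap)
    (T : Submodule ℝ (EuclideanSpace ℝ (Fin n))) (hT : T = ⨅ i, H i)
    (U : Submodule ℝ (EuclideanSpace ℝ (Fin n)))
    (hU : Module.finrank ℝ U = k) (hUT : Module.finrank ℝ ↥(U ⊓ T) = l)
    (β : Fin m → EuclideanSpace ℝ (Fin n))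
    (hβ : ∀ i, β i = (U.orthogonalProjectionOnto (α i) : EuclideanSpace ℝ (Fin n))) :
    U ⊓ (Uᗮ ⊔ Tᗮ) = Submodule.span ℝ (Set.range β) ∧
    Module.finrank ℝ ↥(U ⊓ (Uᗮ ⊔ Tᗮ)) = k - l := by
  -- T is the orthogonal complement of the span of the α's
  have hT' : T = (Submodule.span ℝ (Set.range α))ᗮ := by
    rw [hT]
    ext x
    simp only [Submodule.mem_iInf, hH, LinearMap.mem_ker, innerSL_apply_apply]
    constructor
    · intro h
      intro y hy
      refine Submodule.span_induction ?_ ?_ ?_ ?_ hy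
      · rintro _ ⟨i, rfl⟩; exact h i
      · simp
      · intro a b _ _ ha hb; rw [inner_add_left, ha, hb, add_zero]
      · intro c a _ ha; rw [inner_smul_left, ha, mul_zero]
    · intro h i
      exact h _ (Submodule.subset_span ⟨i, rfl⟩)
  have hTperp : Tᗮ = Submodule.span ℝ (Set.range α) := by
    rw [hT', Submodule.orthogonal_orthogonal]
  have hsup : Uᗮ ⊔ Tᗮ = (U ⊓ T)ᗮ := by
    calc Uᗮ ⊔ Tᗮ = ((Uᗮ ⊔ Tᗮ)ᗮ)ᗮ := (Submodule.orthogonal_orthogonal _).symm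
      _ = (Uᗮᗮ ⊓ Tᗮᗮ)ᗮ := by rw [Submodule.inf_orthogonal]
      _ = (U ⊓ T)ᗮ := by rw [Submodule.orthogonal_orthogonal, Submodule.orthogonal_orthogonal]
  constructor
  · apply le_antisymm
    · rintro x ⟨hxU, hxs⟩
      rw [hTperp] at hxs
      rcases Submodule.mem_sup.1 hxs with ⟨w, hw, t, ht, rfl⟩
      set f : EuclideanSpace ℝ (Fin n) →ₗ[ℝ] EuclideanSpace ℝ (Fin n) :=
        U.subtype ∘ₗ (U.orthogonalProjectionOnto).toLinearMap with hf
      have hfx : f (w + t) = w + t := by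
        exact (Submodule.starProjection_eq_self_iff (K := U)).2 hxU
      have hfw : f w = 0 := by
        simp [hf, Submodule.orthogonalProjectionOnto_apply_of_mem_orthogonal hw]
      have hft : f t ∈ Submodule.span ℝ (Set.range β) := by
        have : f t ∈ Submodule.map f (Submodule.span ℝ (Set.range α)) :=
          Submodule.mem_map_of_mem ht
        rw [Submodule.map_span] at this
        refine Submodule.span_mono ?_ this
        rintro _ ⟨_, ⟨i, rfl⟩, rfl⟩
        exact ⟨i, by simp [hf, hβ]⟩
      have : w + t = f t := by rw [← hfx, map_add, hfw, zero_add]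
      rw [this]; exact hft
    · rw [Submodule.span_le]
      rintro _ ⟨i, rfl⟩
      refine ⟨by rw [hβ]; exact (U.orthogonalProjectionOnto (α i)).2, ?_⟩
      have h1 : α i - β i ∈ Uᗮ := by
        rw [hβ]; exact Submodule.sub_starProjection_mem_orthogonal (α i)
      have h2 : α i ∈ Tᗮ := by
        rw [hTperp]; exact Submodule.subset_span ⟨i, rfl⟩
      have : β i = -(α i - β i) + α i := by abel
      rw [this]
      exact Submodule.add_mem_sup (Submodule.neg_mem _ h1) h2
  · rw [hsup]
    have h := Submodule.finrank_add_inf_finrank_orthogonal (inf_le_left : U ⊓ T ≤ U)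
    rw [hUT, hU, inf_comm] at h
    omega
end

section
/- Let $\mathcal{A} = \{H_1,\dots,H_m\}$ be linear hyperplanes in $\mathbb{R}^n$ with $H_i = \ker\langle\alpha_i,\cdot\rangle$, $T = \bigcap_i H_i$, and let $U$ be a $k$-dimensional subspace with $\dim(U\cap T) = l$. Let $\beta_i$ be the orthogonal projection of $\alpha_i$ onto $U$. If $I\subseteq[m]$ has $|I| = k-l$ and $\{\beta_i \mid i\in I\}$ is linearly independent, then $\big(U\cap(U^\perp+T^\perp)\big) \oplus \bigcap_{i\in I}H_i = \mathbb{R}^n$. -/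
open RealInnerProductSpace Module

theorem stmt6 {n m k l : ℕ}
    (α : Fin m → EuclideanSpace ℝ (Fin n)) (hα : ∀ i, α i ≠ 0)
    (H : Fin m → Submodule ℝ (EuclideanSpace ℝ (Fin n)))
    (hH : ∀ i, H i = LinearMap.ker (innerSL ℝ (α i)).toLinearMap)
    (T : Submodule ℝ (EuclideanSpace ℝ (Fin n))) (hT : T = ⨅ i, H i)
    (U : Submodule ℝ (EuclideanSpace ℝ (Fin n)))
    (hU : Module.finrank ℝ U = k) (hUT : Module.finrank ℝ ↥(U ⊓ T) = l)
    (β : Fin m → EuclideanSpace ℝ (Fin n))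
    (hβ : ∀ i, β i = (U.orthogonalProjectionOnto (α i) : EuclideanSpace ℝ (Fin n)))
    (I : Finset (Fin m)) (hcard : I.card = k - l)
    (hind : LinearIndependent ℝ (fun i : I => β i)) :
    (U ⊓ (Uᗮ ⊔ Tᗮ)) ⊓ (⨅ i ∈ I, H i) = ⊥ ∧
    (U ⊓ (Uᗮ ⊔ Tᗮ)) ⊔ (⨅ i ∈ I, H i) = ⊤ := by
  classical
  have hlk : l ≤ k := by
    rw [← hU, ← hUT]; exact Submodule.finrank_mono inf_le_left
  set V : Submodule ℝ (EuclideanSpace ℝ (Fin n)) := U ⊓ T with hV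
  have hsup : Uᗮ ⊔ Tᗮ = Vᗮ := by
    rw [← (Uᗮ ⊔ Tᗮ).orthogonal_orthogonal]
    congr 1
    rw [← Submodule.inf_orthogonal, Submodule.orthogonal_orthogonal,
      Submodule.orthogonal_orthogonal]
  rw [hsup]
  set K : Submodule ℝ (EuclideanSpace ℝ (Fin n)) := ⨅ i ∈ I, H i with hK
  -- α independence
  have hβα : (fun i : I => β i) =
      (U.subtype ∘ₗ U.orthogonalProjectionOnto.toLinearMap) ∘ (fun i : I => α i) := by
    funext i; simp [hβ]
  have hαind : LinearIndependent ℝ (fun i : I => α i) :=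
    LinearIndependent.of_comp _ (hβα ▸ hind)
  set S : Submodule ℝ (EuclideanSpace ℝ (Fin n)) :=
    Submodule.span ℝ (Set.range (fun i : I => β i)) with hS
  set A : Submodule ℝ (EuclideanSpace ℝ (Fin n)) :=
    Submodule.span ℝ (Set.range (fun i : I => α i)) with hA
  have hScard : finrank ℝ S = k - l := by
    rw [hS, finrank_span_eq_card hind, Fintype.card_coe, hcard]
  have hAcard : finrank ℝ A = k - l := by
    rw [hA, finrank_span_eq_card hαind, Fintype.card_coe, hcard]
  -- dim of W
  have hWrank : finrank ℝ (U ⊓ Vᗮ : Submodule ℝ (EuclideanSpace ℝ (Fin n))) = k - l := by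
    rw [inf_comm]
    exact Submodule.finrank_add_inf_finrank_orthogonal' inf_le_left
      (by rw [hUT, hU]; omega)
  -- membership facts
  have hαH : ∀ (i : Fin m) (y : EuclideanSpace ℝ (Fin n)), y ∈ T → ⟪α i, y⟫ = 0 := by
    intro i y hy
    have : y ∈ H i := by rw [hT] at hy; exact (Submodule.mem_iInf _).1 hy i
    rw [hH i] at this
    simpa using this
  have hproj : ∀ (i : Fin m) (y : EuclideanSpace ℝ (Fin n)), y ∈ U → ⟪y, α i - β i⟫ = 0 := by
    intro i y hy
    have hmem : α i - β i ∈ Uᗮ := by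
      rw [hβ i]
      exact Submodule.sub_starProjection_mem_orthogonal (K := U) (α i)
    exact Submodule.inner_right_of_mem_orthogonal hy hmem
  have hSW : S ≤ U ⊓ Vᗮ := by
    rw [hS, Submodule.span_le]
    rintro _ ⟨i, rfl⟩
    show β (i : Fin m) ∈ U ⊓ Vᗮ
    refine ⟨by rw [hβ i]; exact SetLike.coe_mem _, ?_⟩
    simp only [SetLike.mem_coe]
    rw [Submodule.mem_orthogonal]
    intro y hy
    have h1 : ⟪y, α ↑i - β ↑i⟫ = 0 := hproj i y hy.1
    have h2 : ⟪y, α ↑i⟫ = 0 := by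
      rw [real_inner_comm]; exact hαH i y hy.2
    rw [inner_sub_right, h2] at h1
    linarith
  have hSeqW : S = U ⊓ Vᗮ :=
    Submodule.eq_of_le_of_finrank_le hSW (by rw [hWrank, hScard])
  -- inf = ⊥
  have hbot : (U ⊓ Vᗮ) ⊓ K = ⊥ := by
    rw [eq_bot_iff]
    rintro x ⟨hxW, hxK⟩
    have hxU : x ∈ U := hxW.1
    have hKα : ∀ i ∈ I, ⟪α i, x⟫ = 0 := by
      intro i hi
      have : x ∈ H i := by
        rw [hK] at hxK
        exact (Submodule.mem_iInf _).1 ((Submodule.mem_iInf _).1 hxK i) hi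
      rw [hH i] at this
      simpa using this
    have hβx : ∀ i : I, ⟪β i, x⟫ = 0 := by
      intro i
      have h1 : ⟪x, α ↑i - β ↑i⟫ = 0 := hproj i x hxU
      have h2 : ⟪x, α ↑i⟫ = 0 := by rw [real_inner_comm]; exact hKα i i.2
      rw [inner_sub_right] at h1
      rw [real_inner_comm]
      linarith
    have hxS : x ∈ S := hSeqW ▸ hxW
    have hxSo : x ∈ Sᗮ := by
      rw [Submodule.mem_orthogonal]
      intro u hu
      have hle : S ≤ LinearMap.ker (innerSL ℝ x).toLinearMap := by
        rw [hS, Submodule.span_le]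
        rintro _ ⟨i, rfl⟩
        simp only [SetLike.mem_coe, LinearMap.mem_ker, ContinuousLinearMap.coe_coe,
          innerSL_apply_apply]
        rw [← real_inner_comm]; exact hβx i
      have := hle hu
      simp only [LinearMap.mem_ker, ContinuousLinearMap.coe_coe, innerSL_apply_apply] at this
      rw [← real_inner_comm]
      exact this
    have : x ∈ S ⊓ Sᗮ := ⟨hxS, hxSo⟩
    rwa [(Submodule.orthogonal_disjoint S).eq_bot] at this
  -- K = Aᗮ
  have hKA : K = Aᗮ := by
    apply le_antisymm
    · intro x hx
      rw [Submodule.mem_orthogonal]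
      intro u hu
      have hle : A ≤ LinearMap.ker (innerSL ℝ x).toLinearMap := by
        rw [hA, Submodule.span_le]
        rintro _ ⟨i, rfl⟩
        simp only [SetLike.mem_coe, LinearMap.mem_ker, ContinuousLinearMap.coe_coe,
          innerSL_apply_apply]
        have : x ∈ H (↑i) := by
          rw [hK] at hx
          exact (Submodule.mem_iInf _).1 ((Submodule.mem_iInf _).1 hx i) i.2
        rw [hH] at this
        simp only [LinearMap.mem_ker, ContinuousLinearMap.coe_coe, innerSL_apply_apply] at this
        rw [real_inner_comm]; exact this
      have := hle hu
      simp only [LinearMap.mem_ker, ContinuousLinearMap.coe_coe, innerSL_apply_apply] at this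
      rw [← real_inner_comm]
      exact this
    · intro x hx
      rw [hK]
      refine (Submodule.mem_iInf _).2 fun i => (Submodule.mem_iInf _).2 fun hi => ?_
      rw [hH]
      have : α i ∈ A := Submodule.subset_span ⟨⟨i, hi⟩, rfl⟩
      have := (Submodule.mem_orthogonal A x).1 hx (α i) this
      simpa using this
  have hn : finrank ℝ (EuclideanSpace ℝ (Fin n)) = n := finrank_euclideanSpace_fin
  have hArank := Submodule.finrank_add_finrank_orthogonal A
  rw [hAcard, hn] at hArank
  have hKrank : finrank ℝ K = n - (k - l) := by rw [hKA]; omega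
  refine ⟨hbot, ?_⟩
  have hsum := Submodule.finrank_sup_add_finrank_inf_eq (U ⊓ Vᗮ) K
  rw [hbot, finrank_bot, hWrank, hKrank, add_zero] at hsum
  apply Submodule.eq_top_of_finrank_eq
  rw [hn, hsum]
  omega
end

section
/- Let $\mathcal{A} = \{H_1,\dots,H_m\}$ be linear hyperplanes in $\mathbb{R}^n$ with $H_i = \ker\langle\alpha_i,\cdot\rangle$, $T = \bigcap_i H_i$, $U$ a $k$-dimensional subspace with $\dim(U\cap T) = l$, and $\beta_i$ the orthogonal projection of $\alpha_i$ onto $U$. If $I\subseteq[m]$ has $|I| = k-l$ and $\big(U\cap(U^\perp+T^\perp)\big) \oplus \bigcap_{i\in I}H_i = \mathbb{R}^n$, then $\{\beta_i \mid i\in I\}$ is linearly independent. -/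
open RealInnerProductSpace

theorem stmt7 {n m k l : ℕ}
    (α : Fin m → EuclideanSpace ℝ (Fin n)) (hα : ∀ i, α i ≠ 0)
    (H : Fin m → Submodule ℝ (EuclideanSpace ℝ (Fin n)))
    (hH : ∀ i, H i = LinearMap.ker (innerSL ℝ (α i) : EuclideanSpace ℝ (Fin n) →ₗ[ℝ] ℝ))
    (T : Submodule ℝ (EuclideanSpace ℝ (Fin n))) (hT : T = ⨅ i, H i)
    (U : Submodule ℝ (EuclideanSpace ℝ (Fin n)))
    (hU : Module.finrank ℝ U = k) (hUT : Module.finrank ℝ ↥(U ⊓ T) = l)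
    (β : Fin m → EuclideanSpace ℝ (Fin n))
    (hβ : ∀ i, β i = (U.orthogonalProjectionOnto (α i) : EuclideanSpace ℝ (Fin n)))
    (I : Finset (Fin m)) (hcard : I.card = k - l)
    (hdirect : (U ⊓ (Uᗮ ⊔ Tᗮ)) ⊓ (⨅ i ∈ I, H i) = ⊥ ∧ (U ⊓ (Uᗮ ⊔ Tᗮ)) ⊔ (⨅ i ∈ I, H i) = ⊤) :
    LinearIndependent ℝ (fun i : I => β i) := by
  classical
  set W : Submodule ℝ (EuclideanSpace ℝ (Fin n)) := U ⊓ (Uᗮ ⊔ Tᗮ) with hWdef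
  set K : Submodule ℝ (EuclideanSpace ℝ (Fin n)) := ⨅ i ∈ I, H i with hKdef
  -- Uᗮ ⊔ Tᗮ = (U ⊓ T)ᗮ
  have hsup : Uᗮ ⊔ Tᗮ = (U ⊓ T)ᗮ := by
    have h := Submodule.inf_orthogonal Uᗮ Tᗮ
    rw [Submodule.orthogonal_orthogonal, Submodule.orthogonal_orthogonal] at h
    rw [h, Submodule.orthogonal_orthogonal]
  -- dim W = k - l
  have hWdim : Module.finrank ℝ W = k - l := by
    have h1 : (U ⊓ T) ≤ U := inf_le_left
    have h2 := Submodule.finrank_add_inf_finrank_orthogonal (𝕜 := ℝ) h1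
    have h3 : W = (U ⊓ T)ᗮ ⊓ U := by rw [hWdef, hsup, inf_comm]
    rw [h3]
    omega
  -- β i ∈ W
  have hβW : ∀ i, β i ∈ W := by
    intro i
    constructor
    · rw [hβ]; exact (U.orthogonalProjectionOnto (α i)).2
    · have hαT : α i ∈ Tᗮ := by
        rw [Submodule.mem_orthogonal]
        intro x hx
        have hxi : x ∈ H i := by
          rw [hT] at hx
          exact Submodule.mem_iInf _ |>.1 hx i
        rw [hH i] at hxi
        have := LinearMap.mem_ker.1 hxi
        rw [real_inner_comm]; simpa using this
      have hsub : α i - β i ∈ Uᗮ := by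
        rw [hβ]; exact U.sub_starProjection_mem_orthogonal (α i)
      have heq : β i = α i - (α i - β i) := (sub_sub_cancel (α i) (β i)).symm
      rw [heq]
      exact Submodule.sub_mem _ (Submodule.mem_sup_right hαT) (Submodule.mem_sup_left hsub)
  -- key injectivity: v ∈ W orthogonal to all β i (i ∈ I) is zero
  have hkey : ∀ v ∈ W, (∀ i ∈ I, ⟪β i, v⟫ = 0) → v = 0 := by
    intro v hvW hv
    have hvU : v ∈ U := hvW.1
    have hvK : v ∈ K := by
      rw [hKdef]
      refine (Submodule.mem_iInf _).2 fun i => (Submodule.mem_iInf _).2 fun hi => ?_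
      rw [hH i]
      have hproj : ⟪β i, v⟫ = ⟪α i, v⟫ := by
        rw [hβ, ← Submodule.starProjection_apply, Submodule.inner_starProjection_left_eq_right,
          Submodule.starProjection_apply]
        congr 1
        exact congrArg Subtype.val
          (Submodule.orthogonalProjectionOnto_mem_subspace_eq_self (⟨v, hvU⟩ : U))
      have : ⟪α i, v⟫ = 0 := by rw [← hproj]; exact hv i hi
      simpa [LinearMap.mem_ker] using this
    have : v ∈ W ⊓ K := ⟨hvW, hvK⟩
    rw [hdirect.1] at this
    simpa using this
  -- span of the β i's
  set S : Submodule ℝ (EuclideanSpace ℝ (Fin n)) :=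
    Submodule.span ℝ (Set.range fun i : I => β i) with hSdef
  have hSW : S ≤ W := by
    rw [hSdef, Submodule.span_le]
    rintro _ ⟨i, rfl⟩
    exact hβW i
  have hSorth : Sᗮ ⊓ W = ⊥ := by
    rw [eq_bot_iff]
    rintro v ⟨hvS, hvW⟩
    have hvS' : v ∈ Sᗮ := hvS
    have hvW' : v ∈ W := hvW
    have : v = 0 := by
      refine hkey v hvW' fun i hi => ?_
      exact (Submodule.mem_orthogonal _ _).1 hvS' (β i)
        (Submodule.subset_span ⟨⟨i, hi⟩, rfl⟩)
    simp [this]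
  have hSdim : Module.finrank ℝ S = k - l := by
    have := Submodule.finrank_add_inf_finrank_orthogonal (𝕜 := ℝ) hSW
    rw [hSorth] at this
    simpa [hWdim] using this
  rw [linearIndependent_iff_card_eq_finrank_span, Set.finrank, ← hSdef, hSdim,
    Fintype.card_coe, hcard]
end

section
/- Let $\mathcal{A} = \{H_1,\dots,H_m\}$ be linear hyperplanes in $\mathbb{R}^n$ with $H_i = \ker\langle\alpha_i,\cdot\rangle$, $T = \bigcap_i H_i$, $U$ a $k$-dimensional subspace with $\dim(U\cap T) = l$, and $\beta_i$ the orthogonal projection of $\alpha_i$ onto $U$. For $I\subseteq[m]$, the following are equivalent: (1) $|I| = k-l$ and $\{\beta_i \mid i\in I\}$ is linearly independent; (2) $|I| = k-l$ and $\big(U\cap(U^\perp+T^\perp)\big)\oplus\bigcap_{i\in I}H_i = \mathbb{R}^n$. -/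
open RealInnerProductSpace Module

private lemma mem_orthogonal_span_aux {F : Type*} [NormedAddCommGroup F] [InnerProductSpace ℝ F]
    (s : Set F) (x : F) : x ∈ (Submodule.span ℝ s)ᗮ ↔ ∀ v ∈ s, ⟪v, x⟫ = 0 := by
  constructor
  · intro h v hv
    exact (Submodule.mem_orthogonal _ x).mp h v (Submodule.subset_span hv)
  · intro h
    rw [Submodule.mem_orthogonal]
    intro u hu
    induction hu using Submodule.span_induction with
    | mem v hv => exact h v hv
    | zero => simp
    | add a b _ _ ha hb => rw [inner_add_left, ha, hb, add_zero]
    | smul c a _ ha => rw [inner_smul_left, ha, mul_zero]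

theorem stmt8 {n m k l : ℕ}
    (α : Fin m → EuclideanSpace ℝ (Fin n)) (hα : ∀ i, α i ≠ 0)
    (H : Fin m → Submodule ℝ (EuclideanSpace ℝ (Fin n)))
    (hH : ∀ i, H i = LinearMap.ker (innerSL ℝ (α i) : EuclideanSpace ℝ (Fin n) →ₗ[ℝ] ℝ))
    (T : Submodule ℝ (EuclideanSpace ℝ (Fin n))) (hT : T = ⨅ i, H i)
    (U : Submodule ℝ (EuclideanSpace ℝ (Fin n)))
    (hU : Module.finrank ℝ U = k) (hUT : Module.finrank ℝ ↥(U ⊓ T) = l)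
    (β : Fin m → EuclideanSpace ℝ (Fin n))
    (hβ : ∀ i, β i = (U.orthogonalProjectionOnto (α i) : EuclideanSpace ℝ (Fin n)))
    (I : Finset (Fin m)) :
    (I.card = k - l ∧ LinearIndependent ℝ (fun i : I => β i)) ↔
      (I.card = k - l ∧ (U ⊓ (Uᗮ ⊔ Tᗮ)) ⊓ (⨅ i ∈ I, H i) = ⊥ ∧
        (U ⊓ (Uᗮ ⊔ Tᗮ)) ⊔ (⨅ i ∈ I, H i) = ⊤) := by
  classical
  have hkl : l ≤ k := by
    rw [← hU, ← hUT]; exact Submodule.finrank_mono inf_le_left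
  have hsupbot : (Uᗮ ⊔ Tᗮ)ᗮ = U ⊓ T := by
    rw [← Submodule.inf_orthogonal, U.orthogonal_orthogonal, T.orthogonal_orthogonal]
  have hsup : Uᗮ ⊔ Tᗮ = (U ⊓ T)ᗮ := by
    conv_lhs => rw [← (Uᗮ ⊔ Tᗮ).orthogonal_orthogonal, hsupbot]
  set W : Submodule ℝ (EuclideanSpace ℝ (Fin n)) := U ⊓ (Uᗮ ⊔ Tᗮ) with hWdef
  set Q : Submodule ℝ (EuclideanSpace ℝ (Fin n)) := ⨅ i ∈ I, H i with hQdef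
  have hW2 : W = (U ⊓ T)ᗮ ⊓ U := by rw [hWdef, hsup, inf_comm]
  have hβU : ∀ i, β i ∈ U := by
    intro i; rw [hβ i]; exact (U.orthogonalProjectionOnto (α i)).2
  have hinner : ∀ i, ∀ x ∈ U, ⟪β i, x⟫ = ⟪α i, x⟫ := by
    intro i x hx
    have h0 : ⟪α i - β i, x⟫ = 0 := by
      rw [hβ i]
      exact (Submodule.mem_orthogonal' _ _).mp
        (U.sub_starProjection_mem_orthogonal (α i)) x hx
    rw [inner_sub_left] at h0
    linarith
  have hαT : ∀ i, ∀ x ∈ T, ⟪α i, x⟫ = 0 := by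
    intro i x hx
    rw [hT, Submodule.mem_iInf] at hx
    have := hx i
    rw [hH i, LinearMap.mem_ker] at this
    exact this
  have hβW : ∀ i, β i ∈ W := by
    intro i
    rw [hW2]
    refine ⟨(Submodule.mem_orthogonal' _ _).mpr fun x hx => ?_, hβU i⟩
    rw [hinner i x hx.1]
    exact hαT i x hx.2
  set S : Submodule ℝ (EuclideanSpace ℝ (Fin n)) :=
    Submodule.span ℝ (Set.range fun i : I => β i) with hSdef
  have hSW : S ≤ W := by
    rw [hSdef, Submodule.span_le]
    rintro _ ⟨i, rfl⟩
    exact hβW i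
  have hmemQ : ∀ x, x ∈ Q ↔ ∀ i ∈ I, ⟪α i, x⟫ = 0 := by
    intro x
    rw [hQdef]
    simp only [Submodule.mem_iInf]
    constructor
    · intro h i hi
      have := h i hi
      rwa [hH, LinearMap.mem_ker] at this
    · intro h i hi
      rw [hH, LinearMap.mem_ker]
      exact h i hi
  have hkey : Q ⊓ W = Sᗮ ⊓ W := by
    ext x
    simp only [Submodule.mem_inf, and_congr_left_iff]
    intro hxW
    have hxU : x ∈ U := hxW.1
    rw [hmemQ, hSdef, mem_orthogonal_span_aux]
    constructor
    · rintro h _ ⟨i, rfl⟩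
      rw [hinner _ x hxU]
      exact h i i.2
    · intro h i hi
      have := h (β i) ⟨⟨i, hi⟩, rfl⟩
      rwa [hinner i x hxU] at this
  have hWrank : finrank ℝ W = k - l := by
    have := Submodule.finrank_add_inf_finrank_orthogonal (K₁ := U ⊓ T) (K₂ := U) inf_le_left
    rw [hUT, hU, ← hW2] at this
    omega
  have hWS : finrank ℝ S + finrank ℝ (Sᗮ ⊓ W : Submodule ℝ (EuclideanSpace ℝ (Fin n)))
      = finrank ℝ W := Submodule.finrank_add_inf_finrank_orthogonal hSW
  have hlin_iff : LinearIndependent ℝ (fun i : I => β i) ↔ finrank ℝ S = I.card := by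
    rw [linearIndependent_iff_card_eq_finrank_span, Set.finrank, Fintype.card_coe, ← hSdef,
      eq_comm]
  constructor
  · rintro ⟨hcard, hli⟩
    have hS : finrank ℝ S = k - l := by rw [hlin_iff.mp hli, hcard]
    have hbot : (Sᗮ ⊓ W : Submodule ℝ (EuclideanSpace ℝ (Fin n))) = ⊥ :=
      Submodule.finrank_eq_zero.mp (by omega)
    have hinfbot : W ⊓ Q = ⊥ := by rw [inf_comm W Q, hkey, hbot]
    refine ⟨hcard, hinfbot, ?_⟩
    set A : Submodule ℝ (EuclideanSpace ℝ (Fin n)) :=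
      Submodule.span ℝ (α '' ↑I) with hAdef
    have hAH : Aᗮ ≤ Q := by
      intro x hx
      rw [hAdef, mem_orthogonal_span_aux] at hx
      rw [hmemQ]
      intro i hi
      exact hx (α i) ⟨i, hi, rfl⟩
    have hArank : finrank ℝ A ≤ I.card := by
      rw [hAdef, ← I.coe_image]
      exact (finrank_span_finset_le_card _).trans Finset.card_image_le
    have hAperp : finrank ℝ A + finrank ℝ Aᗮ = n := by
      have := Submodule.finrank_add_finrank_orthogonal (K := A)
      rwa [finrank_euclideanSpace_fin] at this
    have hHrank : finrank ℝ Aᗮ ≤ finrank ℝ Q := Submodule.finrank_mono hAH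
    have hsupdim := Submodule.finrank_sup_add_finrank_inf_eq W Q
    rw [hinfbot, finrank_bot] at hsupdim
    have htople : finrank ℝ (W ⊔ Q : Submodule ℝ (EuclideanSpace ℝ (Fin n))) ≤ n := by
      have := Submodule.finrank_le (W ⊔ Q)
      rwa [finrank_euclideanSpace_fin] at this
    apply Submodule.eq_top_of_finrank_eq
    rw [finrank_euclideanSpace_fin]
    omega
  · rintro ⟨hcard, hbot, -⟩
    refine ⟨hcard, hlin_iff.mpr ?_⟩
    have h0 : (Sᗮ ⊓ W : Submodule ℝ (EuclideanSpace ℝ (Fin n))) = ⊥ := by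
      rw [← hkey, inf_comm Q W]
      exact hbot
    rw [h0, finrank_bot] at hWS
    omega
end
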